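/- Assume a, b, c, d > 0 with a > d and b > c, so that ab > cd and x_∞ := ((b−c)/(ab−cd), (a−d)/(ab−cd)) ∈ (0,∞)². Then for every x₀ ∈ (0,∞)² and every ε > 0: lim_{r→∞} t₋(r,ε) = 0 and liminf_{r→∞} t₊(r,ε) > 0. -/

import Mathlib

set_option maxHeartbeats 1600000

open Real Set Filter ENNReal

/-- The competitive Lotka–Volterra vector field. -/
def bLV (τ₁ τ₂ a b c d : ℝ) (x : ℝ × ℝ) : ℝ × ℝ :=
  (x.1 * (τ₁ - a * x.1 - c * x.2), x.2 * (τ₂ - b * x.2 - d * x.1))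

/-- Oriented angle (in `(-π, π]`) between two (nonzero) vectors of `ℝ²`,
computed as the argument of the quotient of the associated complex numbers. -/
noncomputable def oang (u v : ℝ × ℝ) : ℝ :=
  Complex.arg (({ re := v.1, im := v.2 } : ℂ) / ({ re := u.1, im := u.2 } : ℂ))

/-- `t₋(r,ε)`: first entrance time of the direction of `X r` in the cone of
half-angle `ε` around `x∞` (with values in `ℝ≥0∞`, `inf ∅ = ∞`). -/
noncomputable def tminus (X : ℝ → ℝ → ℝ × ℝ) (xinf : ℝ × ℝ) (ε r : ℝ) : ℝ≥0∞ :=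
  sInf (ENNReal.ofReal '' {s : ℝ | 0 ≤ s ∧ oang (X r s) xinf ∈ Set.Icc (-ε) ε})

/-- `t₊(r,ε)`: first exit time after `t₋(r,ε)` from the cone of half-angle `2ε`
around `x∞` (with values in `ℝ≥0∞`, `inf ∅ = ∞`). -/
noncomputable def tplus (X : ℝ → ℝ → ℝ × ℝ) (xinf : ℝ × ℝ) (ε r : ℝ) : ℝ≥0∞ :=
  sInf (ENNReal.ofReal '' {s : ℝ | 0 ≤ s ∧ tminus X xinf ε r ≤ ENNReal.ofReal s ∧
    oang (X r s) xinf ∉ Set.Icc (-(2 * ε)) (2 * ε)})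

lemma myfst {y : ℝ → ℝ × ℝ} {v : ℝ × ℝ} {t : ℝ} (h : HasDerivAt y v t) :
    HasDerivAt (fun s => (y s).1) v.1 t :=
  (ContinuousLinearMap.fst ℝ ℝ ℝ).hasFDerivAt.comp_hasDerivAt t h

lemma mysnd {y : ℝ → ℝ × ℝ} {v : ℝ × ℝ} {t : ℝ} (h : HasDerivAt y v t) :
    HasDerivAt (fun s => (y s).2) v.2 t :=
  (ContinuousLinearMap.snd ℝ ℝ ℝ).hasFDerivAt.comp_hasDerivAt t h

lemma mono_aux {f f' : ℝ → ℝ} {A B : ℝ}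
    (hd : ∀ t ∈ Icc A B, HasDerivAt f (f' t) t)
    (h0 : ∀ t ∈ Icc A B, 0 ≤ f' t) : MonotoneOn f (Icc A B) := by
  apply monotoneOn_of_deriv_nonneg (convex_Icc A B)
  · exact fun t ht => (hd t ht).continuousAt.continuousWithinAt
  · intro t ht
    rw [interior_Icc] at ht
    exact ((hd t (Ioo_subset_Icc_self ht)).differentiableAt).differentiableWithinAt
  · intro t ht
    rw [interior_Icc] at ht
    rw [(hd t (Ioo_subset_Icc_self ht)).deriv]
    exact h0 t (Ioo_subset_Icc_self ht)

/-- growth bound: derivative ≤ κ on `[A,B]` gives `f B ≤ f A + κ (B - A)`. -/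

lemma lin_growth {f f' : ℝ → ℝ} {A B κ : ℝ} (hAB : A ≤ B)
    (hd : ∀ t ∈ Icc A B, HasDerivAt f (f' t) t)
    (h0 : ∀ t ∈ Icc A B, f' t ≤ κ) : f B ≤ f A + κ * (B - A) := by
  have := mono_aux (f := fun t => κ * t - f t) (f' := fun t => κ - f' t)
    (fun t ht => by
      have h : HasDerivAt (fun t => κ * t - f t) _ t := ((hasDerivAt_id t).const_mul κ).sub (hd t ht)
      simpa using h)
    (fun t ht => by simp; linarith [h0 t ht])
  have h2 := this (left_mem_Icc.2 hAB) (right_mem_Icc.2 hAB) hAB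
  simp only [mul_one] at h2
  linarith

lemma barrier {θ θ' : ℝ → ℝ} {t₀ T c κ : ℝ} (hκ : 0 ≤ κ)
    (hd : ∀ t ∈ Icc t₀ T, HasDerivAt θ (θ' t) t)
    (h0 : θ t₀ ≤ c)
    (hb : ∀ t ∈ Icc t₀ T, c ≤ θ t → θ' t ≤ κ) :
    ∀ t ∈ Icc t₀ T, θ t ≤ c + κ * (t - t₀) := by
  intro t₁ ht₁
  by_contra hcon
  push_neg at hcon
  have hθc : c < θ t₁ := by nlinarith [ht₁.1]
  have hcont : ContinuousOn θ (Icc t₀ t₁) := fun u hu =>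
    (hd u ⟨hu.1, hu.2.trans ht₁.2⟩).continuousAt.continuousWithinAt
  set Z : Set ℝ := {u | u ∈ Icc t₀ t₁ ∧ θ u ≤ c} with hZ
  have hZc : IsClosed Z := by
    have : Z = Icc t₀ t₁ ∩ θ ⁻¹' (Iic c) := by ext u; simp [hZ, and_comm]
    rw [this]
    exact hcont.preimage_isClosed_of_isClosed isClosed_Icc isClosed_Iic
  have hZne : Z.Nonempty := ⟨t₀, ⟨le_refl _, ht₁.1⟩, h0⟩
  have hZbdd : BddAbove Z := ⟨t₁, fun u hu => hu.1.2⟩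
  set m := sSup Z with hm
  have hmZ : m ∈ Z := hZc.csSup_mem hZne hZbdd
  have hmt₁ : m ≤ t₁ := hmZ.1.2
  have ht₀m : t₀ ≤ m := hmZ.1.1
  -- every u in (m, t₁] has θ u > c
  have hgt : ∀ u, m < u → u ≤ t₁ → c < θ u := by
    intro u hu1 hu2
    by_contra h
    push_neg at h
    exact absurd (le_csSup hZbdd ⟨⟨ht₀m.trans hu1.le, hu2⟩, h⟩) (not_le.2 hu1)
  have hmc : c ≤ θ m := by
    rcases eq_or_lt_of_le hmt₁ with h | h
    · rw [h]; exact hθc.le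
    · by_contra hlt
      push_neg at hlt
      obtain ⟨u, hu, hθu⟩ := intermediate_value_Icc hmt₁ (hcont.mono (Icc_subset_Icc ht₀m le_rfl)) (⟨hlt.le, hθc.le⟩ : c ∈ Icc (θ m) (θ t₁))
      rcases eq_or_lt_of_le hu.1 with h2 | h2
      · rw [← h2] at hθu; linarith [hθu ▸ hlt]
      · exact absurd hθu (ne_of_gt (hgt u h2 hu.2))
  have key := lin_growth hmt₁
    (fun u hu => hd u ⟨ht₀m.trans hu.1, hu.2.trans ht₁.2⟩)
    (fun u hu => hb u ⟨ht₀m.trans hu.1, hu.2.trans ht₁.2⟩ (by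
      rcases eq_or_lt_of_le hu.1 with h2 | h2
      · rw [← h2]; exact hmc
      · exact (hgt u h2 hu.2).le))
  have hmle : θ m ≤ c := hmZ.2
  nlinarith [ht₁.1]

lemma pos_ode {f h : ℝ → ℝ} {t₀ : ℝ} (ht₀ : 0 ≤ t₀)
    (hf : ∀ t ∈ Icc 0 t₀, HasDerivAt f (f t * h t) t)
    (hh : ContinuousOn h (Icc 0 t₀))
    (h0 : 0 < f 0) : 0 < f t₀ := by
  by_contra hcon
  push_neg at hcon
  have hcont : ContinuousOn f (Icc 0 t₀) := fun u hu =>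
    (hf u hu).continuousAt.continuousWithinAt
  obtain ⟨t₁, ht₁, hft₁⟩ := intermediate_value_Icc' ht₀ hcont (⟨hcon, h0.le⟩ : (0:ℝ) ∈ Icc (f t₀) (f 0))
  obtain ⟨K, hK⟩ := (isCompact_Icc (a := (0:ℝ)) (b := t₀)).exists_bound_of_continuousOn hh
  have hsub : ∀ s ∈ Icc (0:ℝ) t₁, t₁ - s ∈ Icc 0 t₀ :=
    fun s hs => ⟨by linarith [hs.2], by linarith [hs.1, ht₁.2]⟩
  have hgron := norm_le_gronwallBound_of_norm_deriv_right_le (E := ℝ)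
    (f := fun s => f (t₁ - s)) (f' := fun s => f (t₁ - s) * h (t₁ - s) * (-1))
    (δ := 0) (K := K) (ε := 0) (a := 0) (b := t₁)
    (hcont.comp ((continuous_const.sub continuous_id).continuousOn) (fun u hu => hsub u hu))
    (fun s hs => by
      have : HasDerivAt (fun s => f (t₁ - s)) (f (t₁ - s) * h (t₁ - s) * (-1)) s :=
        (hf (t₁ - s) (hsub s (Ico_subset_Icc_self hs))).comp s
          (((hasDerivAt_id s).const_sub t₁))
      exact this.hasDerivWithinAt)
    (by simp [hft₁])
    (fun s hs => by
      have h1 := hK (t₁ - s) (hsub s (Ico_subset_Icc_self hs))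
      have h2 : ‖f (t₁ - s) * h (t₁ - s) * (-1)‖ = ‖f (t₁ - s)‖ * ‖h (t₁ - s)‖ := by
        simp [abs_mul]
      rw [h2]
      have : ‖f (t₁ - s)‖ * ‖h (t₁ - s)‖ ≤ ‖f (t₁ - s)‖ * K :=
        mul_le_mul_of_nonneg_left h1 (norm_nonneg _)
      calc ‖f (t₁ - s)‖ * ‖h (t₁ - s)‖ ≤ ‖f (t₁ - s)‖ * K := this
        _ = K * ‖f (t₁ - s)‖ + 0 := by ring)
  have := hgron t₁ ⟨ht₁.1, le_refl _⟩
  rw [gronwallBound_ε0] at this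
  simp at this
  rw [this] at h0
  simp at h0

lemma posX (τ₁ τ₂ a b c d : ℝ)
    (x₀ : ℝ × ℝ) (hx₀ : 0 < x₀.1 ∧ 0 < x₀.2)
    (X : ℝ → ℝ → ℝ × ℝ)
    (hX0 : ∀ r : ℝ, 0 < r → X r 0 = (r * x₀.1, r * x₀.2))
    (hXder : ∀ r : ℝ, 0 < r → ∀ t : ℝ, 0 ≤ t →
      HasDerivAt (X r) (bLV τ₁ τ₂ a b c d (X r t)) t)
    (r : ℝ) (hr : 0 < r) (t : ℝ) (ht : 0 ≤ t) :
    0 < (X r t).1 ∧ 0 < (X r t).2 := by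
  have hyc : ContinuousOn (X r) (Icc 0 t) := fun s hs =>
    (hXder r hr s hs.1).continuousAt.continuousWithinAt
  constructor
  · refine pos_ode (h := fun s => τ₁ - a * (X r s).1 - c * (X r s).2) ht
      (fun s hs => by simpa [bLV] using myfst (hXder r hr s hs.1)) ?_ ?_
    · exact (continuousOn_const.sub (continuousOn_const.mul hyc.fst)).sub
        (continuousOn_const.mul hyc.snd)
    · rw [hX0 r hr]; exact mul_pos hr hx₀.1
  · refine pos_ode (h := fun s => τ₂ - b * (X r s).2 - d * (X r s).1) ht
      (fun s hs => by simpa [bLV] using mysnd (hXder r hr s hs.1)) ?_ ?_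
    · exact (continuousOn_const.sub (continuousOn_const.mul hyc.snd)).sub
        (continuousOn_const.mul hyc.fst)
    · rw [hX0 r hr]; exact mul_pos hr hx₀.2

lemma oang_formula (a b c d : ℝ) (ha : 0 < a) (hb : 0 < b) (hc : 0 < c) (hd : 0 < d)
    (had : d < a) (hbc : c < b) (u : ℝ × ℝ) (hu1 : 0 < u.1) (hu2 : 0 < u.2) :
    oang u ((b - c) / (a * b - c * d), (a - d) / (a * b - c * d)) =
      arctan (((a - d) * u.1 - (b - c) * u.2) / ((b - c) * u.1 + (a - d) * u.2)) := by
  have hD : 0 < a * b - c * d := by nlinarith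
  set α := (b - c) / (a * b - c * d) with hα
  set β := (a - d) / (a * b - c * d) with hβ
  have hαp : 0 < α := div_pos (by linarith) hD
  have hβp : 0 < β := div_pos (by linarith) hD
  set z : ℂ := { re := u.1, im := u.2 } with hz
  set w : ℂ := { re := α, im := β } with hw
  have hnsq : 0 < Complex.normSq z := by
    simp only [Complex.normSq_mk, hz]
    nlinarith
  have hre : 0 < (w / z).re := by
    rw [Complex.div_re]
    simp only [hz, hw]
    positivity
  have him : (w / z).im = (β * u.1 - α * u.2) / Complex.normSq z := by
    rw [Complex.div_im]
    simp only [hz, hw]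
    ring
  have harg : |Complex.arg (w / z)| < π / 2 :=
    Complex.abs_arg_lt_pi_div_two_iff.2 (Or.inl hre)
  have h1 : Complex.arg (w / z) = arctan ((w / z).im / (w / z).re) := by
    rw [← Complex.tan_arg]
    exact (Real.arctan_tan (by linarith [(abs_lt.1 harg).1]) (by linarith [(abs_lt.1 harg).2])).symm
  show Complex.arg (w / z) = _
  rw [h1]
  congr 1
  rw [him, Complex.div_re]
  simp only [hz, hw]
  have hden : 0 < α * u.1 + β * u.2 := by positivity
  have hden2 : 0 < (b - c) * u.1 + (a - d) * u.2 := by nlinarith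
  rw [← add_div, div_div_div_cancel_right₀ hnsq.ne']
  rw [hα, hβ]
  rw [div_eq_div_iff (by positivity) hden2.ne']
  field_simp

lemma omega_deriv (τ₁ τ₂ a b c d : ℝ) (had : d < a) (hbc : c < b)
    (y : ℝ → ℝ × ℝ) (t : ℝ)
    (hy : HasDerivAt y (bLV τ₁ τ₂ a b c d (y t)) t)
    (h1 : 0 < (y t).1) (h2 : 0 < (y t).2) :
    HasDerivAt
      (fun s => arctan (((a - d) * (y s).1 - (b - c) * (y s).2) /
        ((b - c) * (y s).1 + (a - d) * (y s).2)))
      (-((y t).1 * (y t).2 * ((τ₂ - τ₁) + ((a - d) * (y t).1 - (b - c) * (y t).2))) /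
        ((y t).1 ^ 2 + (y t).2 ^ 2)) t := by
  have hu : HasDerivAt (fun s => (y s).1)
      ((y t).1 * (τ₁ - a * (y t).1 - c * (y t).2)) t := by
    simpa [bLV] using myfst hy
  have hv : HasDerivAt (fun s => (y s).2)
      ((y t).2 * (τ₂ - b * (y t).2 - d * (y t).1)) t := by
    simpa [bLV] using mysnd hy
  have hF : HasDerivAt (fun s => (a - d) * (y s).1 - (b - c) * (y s).2)
      ((a - d) * ((y t).1 * (τ₁ - a * (y t).1 - c * (y t).2)) -
        (b - c) * ((y t).2 * (τ₂ - b * (y t).2 - d * (y t).1))) t :=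
    (hu.const_mul _).sub (hv.const_mul _)
  have hG : HasDerivAt (fun s => (b - c) * (y s).1 + (a - d) * (y s).2)
      ((b - c) * ((y t).1 * (τ₁ - a * (y t).1 - c * (y t).2)) +
        (a - d) * ((y t).2 * (τ₂ - b * (y t).2 - d * (y t).1))) t :=
    (hu.const_mul _).add (hv.const_mul _)
  have hGt : 0 < (b - c) * (y t).1 + (a - d) * (y t).2 := by nlinarith
  have hq : HasDerivAt (fun s => ((a - d) * (y s).1 - (b - c) * (y s).2) /
      ((b - c) * (y s).1 + (a - d) * (y s).2)) _ t := hF.div hG hGt.ne'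
  have := hq.arctan
  convert this using 1
  have hy2 : (0:ℝ) < (y t).1 ^ 2 + (y t).2 ^ 2 := by positivity
  have hK : (0:ℝ) < (b - c) ^ 2 + (a - d) ^ 2 := by nlinarith
  have e : 1 + (((a - d) * (y t).1 - (b - c) * (y t).2) / ((b - c) * (y t).1 + (a - d) * (y t).2)) ^ 2
      = ((b - c) ^ 2 + (a - d) ^ 2) * ((y t).1 ^ 2 + (y t).2 ^ 2) / ((b - c) * (y t).1 + (a - d) * (y t).2) ^ 2 := by
    rw [div_pow, eq_div_iff (pow_pos hGt 2).ne', add_mul, div_mul_cancel₀ _ (pow_ne_zero 2 hGt.ne'), one_mul]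
    ring
  rw [e, one_div_div, div_mul_div_comm, div_eq_div_iff hy2.ne' (mul_pos (mul_pos hK hy2) (pow_pos hGt 2)).ne']
  ring

lemma v_deriv (τ₁ τ₂ a b c d : ℝ) (y : ℝ → ℝ × ℝ) (t : ℝ)
    (hy : HasDerivAt y (bLV τ₁ τ₂ a b c d (y t)) t) (h1 : 0 < (y t).1) :
    HasDerivAt (fun s => (y s).2 / (y s).1)
      ((y t).2 / (y t).1 * ((τ₂ - τ₁) + ((a - d) * (y t).1 - (b - c) * (y t).2))) t := by
  have hu : HasDerivAt (fun s => (y s).1)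
      ((y t).1 * (τ₁ - a * (y t).1 - c * (y t).2)) t := by
    simpa [bLV] using myfst hy
  have hv : HasDerivAt (fun s => (y s).2)
      ((y t).2 * (τ₂ - b * (y t).2 - d * (y t).1)) t := by
    simpa [bLV] using mysnd hy
  have : HasDerivAt (fun s => (y s).2 / (y s).1) _ t := hv.div hu h1.ne'
  convert this using 1
  field_simp
  ring

lemma S_lower (τ₁ τ₂ a b c d : ℝ) (ha : 0 < a) (hb : 0 < b) (hc : 0 < c) (hd : 0 < d)
    (y : ℝ → ℝ × ℝ) (δ : ℝ) (hδ : 0 < δ)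
    (hyd : ∀ t ∈ Icc 0 δ, HasDerivAt y (bLV τ₁ τ₂ a b c d (y t)) t)
    (hpos : ∀ t ∈ Icc 0 δ, 0 < (y t).1 ∧ 0 < (y t).2) :
    ∀ t ∈ Icc 0 δ,
      exp (-(|τ₁| + |τ₂|) * δ) / (1 / ((y 0).1 + (y 0).2) + (a + b + c + d) * t)
        ≤ (y t).1 + (y t).2 := by
  set T := |τ₁| + |τ₂| with hT
  set A := a + b + c + d with hA
  have hT0 : 0 ≤ T := by positivity
  have hA0 : 0 < A := by positivity
  set W : ℝ → ℝ := fun t => ((y t).1 + (y t).2)⁻¹ with hW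
  set g : ℝ → ℝ := fun t => W t * exp (-T * t) with hg
  -- derivative facts
  have hgd : ∀ t ∈ Icc 0 δ, HasDerivAt g
      ((-( (y t).1 * (τ₁ - a * (y t).1 - c * (y t).2) +
          (y t).2 * (τ₂ - b * (y t).2 - d * (y t).1)) / ((y t).1 + (y t).2)^2)
        * exp (-T * t) + W t * (exp (-T * t) * (-T))) t := by
    intro t ht
    have h1 := (hpos t ht).1
    have h2 := (hpos t ht).2
    have hS : HasDerivAt (fun s => (y s).1 + (y s).2)
        ((y t).1 * (τ₁ - a * (y t).1 - c * (y t).2) +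
          (y t).2 * (τ₂ - b * (y t).2 - d * (y t).1)) t := by
      have hu : HasDerivAt (fun s => (y s).1)
          ((y t).1 * (τ₁ - a * (y t).1 - c * (y t).2)) t := by
        simpa [bLV] using myfst (hyd t ht)
      have hv : HasDerivAt (fun s => (y s).2)
          ((y t).2 * (τ₂ - b * (y t).2 - d * (y t).1)) t := by
        simpa [bLV] using mysnd (hyd t ht)
      exact hu.add hv
    have hWd := hS.inv (by positivity)
    have hed : HasDerivAt (fun t : ℝ => exp (-T * t)) (exp (-T * t) * (-T)) t := by
      simpa using (((hasDerivAt_id t).const_mul (-T)).exp)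
    exact hWd.mul hed
  -- the derivative of g is at most A
  have hbd : ∀ t ∈ Icc 0 δ,
      ((-( (y t).1 * (τ₁ - a * (y t).1 - c * (y t).2) +
          (y t).2 * (τ₂ - b * (y t).2 - d * (y t).1)) / ((y t).1 + (y t).2)^2)
        * exp (-T * t) + W t * (exp (-T * t) * (-T))) ≤ A := by
    intro t ht
    have h1 := (hpos t ht).1
    have h2 := (hpos t ht).2
    set s := (y t).1 + (y t).2 with hs
    have hs0 : 0 < s := by positivity
    have he0 : 0 < exp (-T * t) := exp_pos _
    have he1 : exp (-T * t) ≤ 1 := by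
      rw [exp_le_one_iff]
      nlinarith [ht.1]
    have hτ1 : -|τ₁| ≤ τ₁ := neg_abs_le _
    have hτ2 : -|τ₂| ≤ τ₂ := neg_abs_le _
    -- Q := -S'/s² - T/s ≤ A
    have hSder : -((y t).1 * (τ₁ - a * (y t).1 - c * (y t).2) +
        (y t).2 * (τ₂ - b * (y t).2 - d * (y t).1)) - T * s ≤ A * s ^ 2 := by
      rw [hs, hT, hA]
      nlinarith [mul_nonneg (show (0:ℝ) ≤ τ₁ + |τ₁| by linarith [neg_abs_le τ₁]) h1.le,
        mul_nonneg (show (0:ℝ) ≤ τ₂ + |τ₂| by linarith [neg_abs_le τ₂]) h2.le,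
        mul_nonneg (abs_nonneg τ₂) h1.le, mul_nonneg (abs_nonneg τ₁) h2.le,
        mul_pos h1 h2, sq_nonneg ((y t).1), sq_nonneg ((y t).2)]
    -- now conclude
    have hQ : -((y t).1 * (τ₁ - a * (y t).1 - c * (y t).2) +
        (y t).2 * (τ₂ - b * (y t).2 - d * (y t).1)) / s ^ 2 * exp (-T * t)
          + W t * (exp (-T * t) * (-T)) =
        ((-((y t).1 * (τ₁ - a * (y t).1 - c * (y t).2) +
          (y t).2 * (τ₂ - b * (y t).2 - d * (y t).1)) - T * s) / s ^ 2) * exp (-T * t) := by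
      rw [hW]
      field_simp
      ring
    rw [hQ]
    have hq2 : (-((y t).1 * (τ₁ - a * (y t).1 - c * (y t).2) +
          (y t).2 * (τ₂ - b * (y t).2 - d * (y t).1)) - T * s) / s ^ 2 ≤ A := by
      rw [div_le_iff₀ (by positivity)]
      exact hSder
    nlinarith [mul_le_mul_of_nonneg_right hq2 he0.le]
  -- integrate: g t ≤ g 0 + A * t
  have hkey : ∀ t ∈ Icc 0 δ, g t ≤ g 0 + A * t := by
    intro t ht
    have := lin_growth (A := 0) (B := t) ht.1
      (fun u hu => hgd u ⟨hu.1, hu.2.trans ht.2⟩)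
      (fun u hu => hbd u ⟨hu.1, hu.2.trans ht.2⟩)
    simpa using this
  intro t ht
  have h1 := (hpos t ht).1
  have h2 := (hpos t ht).2
  have h0 := hpos 0 (left_mem_Icc.2 hδ.le)
  have hS0 : 0 < (y 0).1 + (y 0).2 := by nlinarith [h0.1, h0.2]
  have hSt : 0 < (y t).1 + (y t).2 := by positivity
  have hgt := hkey t ht
  have hg0 : g 0 = ((y 0).1 + (y 0).2)⁻¹ := by simp [hg, hW]
  rw [hg0] at hgt
  -- g t = W t * exp (-T t)
  have he0 : 0 < exp (-T * t) := exp_pos _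
  have heδ : exp (-T * δ) ≤ exp (-T * t) := by
    apply exp_le_exp.2
    nlinarith [ht.2]
  have hR : 0 < 1 / ((y 0).1 + (y 0).2) + A * t := by
    have : 0 ≤ A * t := mul_nonneg hA0.le ht.1
    positivity
  rw [div_le_iff₀ hR]
  have h4 : ((y t).1 + (y t).2)⁻¹ * exp (-T * t) ≤ ((y 0).1 + (y 0).2)⁻¹ + A * t := by
    simpa [hg, hW] using hgt
  have h5 := mul_le_mul_of_nonneg_right h4 hSt.le
  have h6 : ((y t).1 + (y t).2)⁻¹ * exp (-T * t) * ((y t).1 + (y t).2) = exp (-T * t) := by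
    field_simp
  rw [h6] at h5
  rw [one_div]
  linarith [heδ, h5]

lemma heq_aux (cc e Aa ss tt : ℝ) (hA : Aa ≠ 0) (hs : ss ≠ 0)
    (h1 : (1 + Aa * ss * tt) ≠ 0) :
    cc * e / Aa * (Aa * ss * 1 / (1 + Aa * ss * tt)) = cc * (e / (1 / ss + Aa * tt)) := by
  have h3 : 1 / ss + Aa * tt = (1 + Aa * ss * tt) / ss := by
    field_simp
  rw [h3, div_div_eq_mul_div]
  field_simp

lemma omega_bound {a b c d κ₂ Δτ tanε ustar p₀ c₁ c₅ vlo y1 y2 : ℝ}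
    (h1 : 0 < y1) (h2 : 0 < y2) (hκ₂0 : 0 ≤ κ₂) (hΔ : -κ₂ ≤ Δτ) (hp₀0 : 0 < p₀)
    (hustar0 : 0 < ustar) (htan : 0 < tanε) (hbc : c < b) (had : d < a)
    (hueq : ustar * (b - c) = a - d) (hp₀eq : p₀ * (1 + ustar ^ 2) = vlo)
    (hc₁ : c₁ = tanε * min (b - c) (a - d)) (hc₅ : c₅ = p₀ * c₁)
    (hvl : vlo * y1 ≤ y2)
    (hFt : 0 < (a - d) * y1 - (b - c) * y2)
    (hqFt : tanε * ((b - c) * y1 + (a - d) * y2) < (a - d) * y1 - (b - c) * y2) :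
    -(y1 * y2 * (Δτ + ((a - d) * y1 - (b - c) * y2))) / (y1 ^ 2 + y2 ^ 2)
      ≤ κ₂ - c₅ * (y1 + y2) := by
  have hP : (0:ℝ) < y1 ^ 2 + y2 ^ 2 := by positivity
  rw [div_le_iff₀ hP]
  have hi : y2 ≤ ustar * y1 := by nlinarith
  have hii : p₀ * (y1 ^ 2 + y2 ^ 2) ≤ y1 * y2 := by
    have h5 : y2 ^ 2 ≤ ustar ^ 2 * y1 ^ 2 := by nlinarith
    have h6 : p₀ * (y1 ^ 2 + y2 ^ 2) ≤ p₀ * ((1 + ustar ^ 2) * y1 ^ 2) := by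
      apply mul_le_mul_of_nonneg_left _ hp₀0.le
      nlinarith
    have h7 : p₀ * ((1 + ustar ^ 2) * y1 ^ 2) = vlo * y1 ^ 2 := by
      rw [← hp₀eq]; ring
    nlinarith [mul_le_mul_of_nonneg_right hvl h1.le]
  have hiv : c₁ * (y1 + y2) ≤ (a - d) * y1 - (b - c) * y2 := by
    rw [hc₁]
    have m1 := min_le_left (b - c) (a - d)
    have m2 := min_le_right (b - c) (a - d)
    have h8 : min (b - c) (a - d) * (y1 + y2) ≤ (b - c) * y1 + (a - d) * y2 := by
      nlinarith
    nlinarith [mul_le_mul_of_nonneg_left h8 htan.le]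
  have k1 : -(y1 * y2 * Δτ) ≤ κ₂ * (y1 ^ 2 + y2 ^ 2) := by
    nlinarith [mul_nonneg (show (0:ℝ) ≤ κ₂ + Δτ by linarith) (mul_pos h1 h2).le,
      mul_nonneg hκ₂0 (show (0:ℝ) ≤ y1 ^ 2 + y2 ^ 2 - y1 * y2 by nlinarith [sq_nonneg (y1 - y2)])]
  have k2 : c₅ * (y1 + y2) * (y1 ^ 2 + y2 ^ 2)
      ≤ y1 * y2 * ((a - d) * y1 - (b - c) * y2) := by
    rw [hc₅]
    nlinarith [mul_le_mul_of_nonneg_right hii hFt.le,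
      mul_le_mul_of_nonneg_left hiv (mul_pos hp₀0 hP).le]
  nlinarith [k1, k2]

lemma enter (τ₁ τ₂ a b c d : ℝ) (ha : 0 < a) (hb : 0 < b) (hc : 0 < c) (hd : 0 < d)
    (had : d < a) (hbc : c < b)
    (x₀ : ℝ × ℝ) (hx₀ : 0 < x₀.1 ∧ 0 < x₀.2)
    (X : ℝ → ℝ → ℝ × ℝ)
    (hX0 : ∀ r : ℝ, 0 < r → X r 0 = (r * x₀.1, r * x₀.2))
    (hXder : ∀ r : ℝ, 0 < r → ∀ t : ℝ, 0 ≤ t →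
      HasDerivAt (X r) (bLV τ₁ τ₂ a b c d (X r t)) t)
    (hside : x₀.2 * (b - c) ≤ x₀.1 * (a - d))
    (ε : ℝ) (hε : 0 < ε) (hε2 : ε < π / 2) (δ : ℝ) (hδ : 0 < δ) :
    ∀ᶠ r in atTop, ∃ s ∈ Icc 0 δ,
      oang (X r s) ((b - c) / (a * b - c * d), (a - d) / (a * b - c * d)) ∈ Icc (-ε) ε := by
  -- constants
  set T : ℝ := |τ₁| + |τ₂| with hT
  set A : ℝ := a + b + c + d with hA
  set κ₂ : ℝ := |τ₂ - τ₁| with hκ₂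
  set v₀ : ℝ := x₀.2 / x₀.1 with hv₀
  set vlo : ℝ := v₀ * exp (-κ₂ * δ) with hvlo
  set ustar : ℝ := (a - d) / (b - c) with hustar
  set p₀ : ℝ := vlo / (1 + ustar ^ 2) with hp₀
  set c₁ : ℝ := tan ε * min (b - c) (a - d) with hc₁
  set c₅ : ℝ := p₀ * c₁ with hc₅
  set Cc : ℝ := c₅ * exp (-T * δ) / A with hCc
  have hκ₂0 : 0 ≤ κ₂ := abs_nonneg _
  have hv₀0 : 0 < v₀ := div_pos hx₀.2 hx₀.1
  have hvlo0 : 0 < vlo := mul_pos hv₀0 (exp_pos _)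
  have hustar0 : 0 < ustar := div_pos (by linarith) (by linarith)
  have hp₀0 : 0 < p₀ := div_pos hvlo0 (by positivity)
  have htanε : 0 < tan ε := tan_pos_of_pos_of_lt_pi_div_two hε hε2
  have hmin0 : 0 < min (b - c) (a - d) := lt_min (by linarith) (by linarith)
  have hc₁0 : 0 < c₁ := mul_pos htanε hmin0
  have hc₅0 : 0 < c₅ := mul_pos hp₀0 hc₁0
  have hA0 : 0 < A := by positivity
  have hCc0 : 0 < Cc := by positivity
  have hx12 : 0 < x₀.1 + x₀.2 := by linarith [hx₀.1, hx₀.2]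
  -- eventual largeness
  have hlin : Tendsto (fun r : ℝ => 1 + A * (r * (x₀.1 + x₀.2)) * δ) atTop atTop := by
    apply tendsto_atTop_add_const_left
    have : Tendsto (fun r : ℝ => r * (A * (x₀.1 + x₀.2) * δ)) atTop atTop :=
      Tendsto.atTop_mul_const (by positivity) tendsto_id
    refine this.congr (fun r => by ring)
  have hlog : Tendsto (fun r : ℝ => Cc * Real.log (1 + A * (r * (x₀.1 + x₀.2)) * δ)) atTop atTop :=
    (Real.tendsto_log_atTop.comp hlin).const_mul_atTop hCc0
  filter_upwards [hlog.eventually_ge_atTop (κ₂ * δ + π / 2), eventually_gt_atTop 0] with r hrL hr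
  -- setup for fixed r
  set y : ℝ → ℝ × ℝ := X r with hy
  have hpos : ∀ t, 0 ≤ t → 0 < (y t).1 ∧ 0 < (y t).2 :=
    fun t ht => posX τ₁ τ₂ a b c d x₀ hx₀ X hX0 hXder r hr t ht
  set F : ℝ → ℝ := fun t => (a - d) * (y t).1 - (b - c) * (y t).2 with hF
  set G : ℝ → ℝ := fun t => (b - c) * (y t).1 + (a - d) * (y t).2 with hG
  set ω : ℝ → ℝ := fun t => arctan (F t / G t) with hω
  have hGpos : ∀ t, 0 ≤ t → 0 < G t := by
    intro t ht
    have := hpos t ht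
    rw [hG]
    dsimp only
    nlinarith [this.1, this.2]
  have hωd : ∀ t, 0 ≤ t → HasDerivAt ω
      (-((y t).1 * (y t).2 * ((τ₂ - τ₁) + F t)) / ((y t).1 ^ 2 + (y t).2 ^ 2)) t :=
    fun t ht => omega_deriv τ₁ τ₂ a b c d had hbc y t (hXder r hr t ht)
      (hpos t ht).1 (hpos t ht).2
  have hωcont : ∀ t ∈ Icc 0 δ, ContinuousWithinAt ω (Icc 0 δ) t :=
    fun t ht => (hωd t ht.1).continuousAt.continuousWithinAt
  have hoang : ∀ s, 0 ≤ s →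
      oang (y s) ((b - c) / (a * b - c * d), (a - d) / (a * b - c * d)) = ω s :=
    fun s hs => oang_formula a b c d ha hb hc hd had hbc (y s) (hpos s hs).1 (hpos s hs).2
  -- initial angle is nonnegative
  have hy0 : y 0 = (r * x₀.1, r * x₀.2) := hX0 r hr
  have hω0pos : 0 ≤ ω 0 := by
    have hF0 : 0 ≤ F 0 := by
      rw [hF]; dsimp only; rw [hy0]; dsimp only; nlinarith
    have hG0 : 0 < G 0 := hGpos 0 le_rfl
    have : arctan 0 ≤ arctan (F 0 / G 0) :=
      arctan_strictMono.monotone (div_nonneg hF0 hG0.le)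
    rw [arctan_zero] at this; exact this
  have hω0lt : ω 0 < π / 2 := arctan_lt_pi_div_two _
  by_cases hcase : ω 0 ≤ ε
  · exact ⟨0, left_mem_Icc.2 hδ.le, by rw [hoang 0 le_rfl]; exact ⟨by linarith, hcase⟩⟩
  push_neg at hcase
  by_contra hcon
  push_neg at hcon
  -- the angle stays above ε on [0, δ]
  have hreg : ∀ t ∈ Icc 0 δ, ε < ω t := by
    intro t ht
    by_contra hle
    push_neg at hle
    have hne : ω t < -ε := by
      rcases lt_or_ge (ω t) (-ε) with h | h
      · exact h
      · exact absurd (hcon t ht) (by rw [hoang t ht.1]; exact fun hh => hh ⟨h, hle⟩)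
    obtain ⟨s, hs, hωs⟩ := intermediate_value_Icc' ht.1
      (fun u hu => (hωcont u ⟨hu.1, hu.2.trans ht.2⟩).mono (Icc_subset_Icc le_rfl ht.2))
      (⟨by linarith, hcase.le⟩ : ε ∈ Icc (ω t) (ω 0))
    exact (hcon s ⟨hs.1, hs.2.trans ht.2⟩) (by rw [hoang s hs.1, hωs]; exact ⟨by linarith, le_rfl⟩)
  -- on the regime, q > tan ε
  have hqF : ∀ t ∈ Icc 0 δ, tan ε * G t < F t := by
    intro t ht
    have h1 : arctan (tan ε) < arctan (F t / G t) := by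
      rw [arctan_tan (by linarith) hε2]; exact hreg t ht
    have h2 : tan ε < F t / G t := arctan_strictMono.lt_iff_lt.1 h1
    exact (lt_div_iff₀ (hGpos t ht.1)).1 h2
  have hFpos : ∀ t ∈ Icc 0 δ, 0 < F t := fun t ht =>
    lt_trans (mul_pos htanε (hGpos t ht.1)) (hqF t ht)
  -- lower bound for the slope v = y₂/y₁
  set v : ℝ → ℝ := fun t => (y t).2 / (y t).1 with hv
  have hvpos : ∀ t, 0 ≤ t → 0 < v t := fun t ht => div_pos (hpos t ht).2 (hpos t ht).1
  have hvd : ∀ t ∈ Icc 0 δ, HasDerivAt (fun s => v s * exp (κ₂ * s))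
      (v t * ((τ₂ - τ₁) + F t) * exp (κ₂ * t) + v t * (exp (κ₂ * t) * κ₂)) t := by
    intro t ht
    have h1 : HasDerivAt v (v t * ((τ₂ - τ₁) + F t)) t :=
      v_deriv τ₁ τ₂ a b c d y t (hXder r hr t ht.1) (hpos t ht.1).1
    have h2 : HasDerivAt (fun s : ℝ => exp (κ₂ * s)) (exp (κ₂ * t) * κ₂) t := by
      simpa using ((hasDerivAt_id t).const_mul κ₂).exp
    exact h1.mul h2
  have hvmono := mono_aux hvd (fun t ht => by
    have h1 := hvpos t ht.1
    have h2 := hFpos t ht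
    have h3 : -κ₂ ≤ τ₂ - τ₁ := neg_abs_le _
    nlinarith [mul_nonneg (mul_pos h1 (exp_pos (κ₂ * t))).le
      (show (0:ℝ) ≤ (τ₂ - τ₁) + F t + κ₂ by linarith)])
  have hvlow : ∀ t ∈ Icc 0 δ, vlo * (y t).1 ≤ (y t).2 := by
    intro t ht
    have h0 := hvmono (left_mem_Icc.2 hδ.le) ht ht.1
    have h1 : v 0 ≤ v t * exp (κ₂ * t) := by simpa using h0
    have hv0 : v 0 = v₀ := by
      rw [hv, hv₀]; dsimp only; rw [hy0]; dsimp only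
      rw [mul_div_mul_left _ _ hr.ne']
    rw [hv0] at h1
    have he2 : exp (-κ₂ * δ) * exp (κ₂ * t) ≤ 1 := by
      rw [← exp_add, exp_le_one_iff]
      nlinarith [ht.1, ht.2]
    have h3 : vlo ≤ v t := by
      rw [hvlo]
      nlinarith [hvpos t ht.1, exp_pos (κ₂ * t), exp_pos (-κ₂ * δ),
        mul_le_mul_of_nonneg_right h1 (exp_pos (-κ₂ * δ)).le]
    have h4 := (hpos t ht.1).1
    rw [hv] at h3
    calc vlo * (y t).1 ≤ (y t).2 / (y t).1 * (y t).1 :=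
          mul_le_mul_of_nonneg_right h3 h4.le
      _ = (y t).2 := by field_simp
  -- pointwise differential inequality for ω
  have hueq : ustar * (b - c) = a - d := by
    rw [hustar]; exact div_mul_cancel₀ _ (by linarith)
  have hp₀eq : p₀ * (1 + ustar ^ 2) = vlo := by
    rw [hp₀]; exact div_mul_cancel₀ _ (by positivity)
  have hωb : ∀ t ∈ Icc 0 δ,
      -((y t).1 * (y t).2 * ((τ₂ - τ₁) + F t)) / ((y t).1 ^ 2 + (y t).2 ^ 2)
        ≤ κ₂ - c₅ * ((y t).1 + (y t).2) := by
    intro t ht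
    obtain ⟨h1, h2⟩ := hpos t ht.1
    have hFt := hFpos t ht
    have hqFt := hqF t ht
    rw [hF] at hFt ⊢
    rw [hF, hG] at hqFt
    dsimp only at hFt hqFt ⊢
    exact omega_bound h1 h2 hκ₂0 (neg_abs_le _) hp₀0 hustar0 htanε hbc had
      hueq hp₀eq hc₁ hc₅ (hvlow t ht) hFt hqFt
  -- integrated lower bound via the logistic comparison
  set S₀ : ℝ := r * (x₀.1 + x₀.2) with hS₀
  have hS₀0 : 0 < S₀ := mul_pos hr hx12
  have hy0S : (y 0).1 + (y 0).2 = S₀ := by rw [hy0, hS₀]; dsimp only; ring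
  have hSlow := S_lower τ₁ τ₂ a b c d ha hb hc hd y δ hδ
    (fun t ht => hXder r hr t ht.1) (fun t ht => hpos t ht.1)
  set L : ℝ → ℝ := fun t => Cc * Real.log (1 + A * S₀ * t) with hL
  have hLd : ∀ t ∈ Icc 0 δ, HasDerivAt L (Cc * ((A * S₀ * 1) / (1 + A * S₀ * t))) t := by
    intro t ht
    have h0 : (0:ℝ) < 1 + A * S₀ * t := by
      have : 0 ≤ A * S₀ * t := mul_nonneg (mul_nonneg hA0.le hS₀0.le) ht.1
      linarith
    have h1 := (((hasDerivAt_id t).const_mul (A * S₀)).const_add 1).log h0.ne'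
    exact h1.const_mul Cc
  have hLb : ∀ t ∈ Icc 0 δ, Cc * ((A * S₀ * 1) / (1 + A * S₀ * t)) ≤ c₅ * ((y t).1 + (y t).2) := by
    intro t ht
    have h2 := hSlow t ht
    rw [hy0S] at h2
    have h3 : 0 ≤ A * S₀ * t := mul_nonneg (mul_nonneg hA0.le hS₀0.le) ht.1
    have h3' : 0 < 1 / S₀ + A * t := by
      have := mul_nonneg hA0.le ht.1
      positivity
    have heq : Cc * ((A * S₀ * 1) / (1 + A * S₀ * t))
        = c₅ * (exp (-T * δ) / (1 / S₀ + A * t)) := by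
      rw [hCc]
      exact heq_aux c₅ (exp (-T * δ)) A S₀ t hA0.ne' hS₀0.ne' (by linarith)
    rw [heq]
    exact mul_le_mul_of_nonneg_left h2 hc₅0.le
  have hmono2 := mono_aux
    (f := fun t => κ₂ * t - ω t - L t)
    (f' := fun t => κ₂ - (-((y t).1 * (y t).2 * ((τ₂ - τ₁) + F t)) / ((y t).1 ^ 2 + (y t).2 ^ 2))
      - Cc * ((A * S₀ * 1) / (1 + A * S₀ * t)))
    (fun t ht => by
      have h : HasDerivAt (fun t => κ₂ * t - ω t - L t) _ t :=
        (((hasDerivAt_id t).const_mul κ₂).sub (hωd t ht.1)).sub (hLd t ht)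
      simpa using h)
    (fun t ht => by
      have b1 := hωb t ht
      have b2 := hLb t ht
      linarith)
  have hfin : κ₂ * 0 - ω 0 - L 0 ≤ κ₂ * δ - ω δ - L δ :=
    hmono2 (left_mem_Icc.2 hδ.le) (right_mem_Icc.2 hδ.le) hδ.le
  have hL0 : L 0 = 0 := by
    show Cc * Real.log (1 + A * S₀ * 0) = 0
    norm_num
  have hLδ : L δ = Cc * Real.log (1 + A * (r * (x₀.1 + x₀.2)) * δ) := rfl
  have hωδ := hreg δ (right_mem_Icc.2 hδ.le)
  rw [hL0, hLδ] at hfin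
  linarith [hrL, hω0lt, hωδ, hε]

lemma stay_bound {κ Δτ F y1 y2 : ℝ} (h1 : 0 < y1) (h2 : 0 < y2)
    (hκ : |Δτ| ≤ κ) (hF : 0 ≤ F) :
    -(y1 * y2 * (Δτ + F)) / (y1 ^ 2 + y2 ^ 2) ≤ κ := by
  rw [div_le_iff₀ (by positivity)]
  have h3 : -Δτ ≤ |Δτ| := neg_le_abs _
  have h4 : 0 ≤ κ := le_trans (abs_nonneg _) hκ
  nlinarith [mul_pos h1 h2, sq_nonneg (y1 - y2),
    mul_nonneg (mul_pos h1 h2).le hF,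
    mul_nonneg (mul_pos h1 h2).le (show 0 ≤ κ + Δτ by linarith),
    mul_nonneg h4 (sq_nonneg (y1 - y2))]

lemma stay_bound' {κ Δτ F y1 y2 : ℝ} (h1 : 0 < y1) (h2 : 0 < y2)
    (hκ : |Δτ| ≤ κ) (hF : F ≤ 0) :
    y1 * y2 * (Δτ + F) / (y1 ^ 2 + y2 ^ 2) ≤ κ := by
  have h5 : |(-Δτ)| ≤ κ := by rw [abs_neg]; exact hκ
  have h6 := stay_bound (κ := κ) (Δτ := -Δτ) (F := -F) h1 h2 h5 (by linarith)
  have heq : -(y1 * y2 * (-Δτ + -F)) = y1 * y2 * (Δτ + F) := by ring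
  rwa [heq] at h6

lemma stay (τ₁ τ₂ a b c d : ℝ) (ha : 0 < a) (hb : 0 < b) (hc : 0 < c) (hd : 0 < d)
    (had : d < a) (hbc : c < b)
    (x₀ : ℝ × ℝ) (hx₀ : 0 < x₀.1 ∧ 0 < x₀.2)
    (X : ℝ → ℝ → ℝ × ℝ)
    (hX0 : ∀ r : ℝ, 0 < r → X r 0 = (r * x₀.1, r * x₀.2))
    (hXder : ∀ r : ℝ, 0 < r → ∀ t : ℝ, 0 ≤ t →
      HasDerivAt (X r) (bLV τ₁ τ₂ a b c d (X r t)) t)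
    (ε : ℝ) (hε : 0 < ε) (r : ℝ) (hr : 0 < r) :
    ENNReal.ofReal (ε / (|τ₂ - τ₁| + 1))
      ≤ tplus X ((b - c) / (a * b - c * d), (a - d) / (a * b - c * d)) ε r := by
  set κ : ℝ := |τ₂ - τ₁| + 1 with hκdef
  have hκ0 : 0 < κ := by positivity
  have hκabs : |τ₂ - τ₁| ≤ κ := by rw [hκdef]; linarith
  set xinf : ℝ × ℝ := ((b - c) / (a * b - c * d), (a - d) / (a * b - c * d)) with hxinf
  set E : Set ℝ := {s : ℝ | 0 ≤ s ∧ oang (X r s) xinf ∈ Set.Icc (-ε) ε} with hE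
  set y : ℝ → ℝ × ℝ := X r with hy
  have hpos : ∀ t, 0 ≤ t → 0 < (y t).1 ∧ 0 < (y t).2 :=
    fun t ht => posX τ₁ τ₂ a b c d x₀ hx₀ X hX0 hXder r hr t ht
  set F : ℝ → ℝ := fun t => (a - d) * (y t).1 - (b - c) * (y t).2 with hF
  set G : ℝ → ℝ := fun t => (b - c) * (y t).1 + (a - d) * (y t).2 with hG
  set ω : ℝ → ℝ := fun t => arctan (F t / G t) with hω
  have hGpos : ∀ t, 0 ≤ t → 0 < G t := by
    intro t ht
    have := hpos t ht
    rw [hG]; dsimp only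
    nlinarith [this.1, this.2]
  have hωd : ∀ t, 0 ≤ t → HasDerivAt ω
      (-((y t).1 * (y t).2 * ((τ₂ - τ₁) + F t)) / ((y t).1 ^ 2 + (y t).2 ^ 2)) t :=
    fun t ht => omega_deriv τ₁ τ₂ a b c d had hbc y t (hXder r hr t ht)
      (hpos t ht).1 (hpos t ht).2
  have hoang : ∀ s, 0 ≤ s → oang (y s) xinf = ω s :=
    fun s hs => oang_formula a b c d ha hb hc hd had hbc (y s) (hpos s hs).1 (hpos s hs).2
  rcases eq_empty_or_nonempty E with hne | hne
  · -- no entrance: tminus = ∞, tplus = ∞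
    have ht : tminus X xinf ε r = ⊤ := by
      rw [show tminus X xinf ε r = sInf (ENNReal.ofReal '' E) from rfl, hne]
      simp
    rw [show tplus X xinf ε r = sInf (ENNReal.ofReal '' {s : ℝ | 0 ≤ s ∧
      tminus X xinf ε r ≤ ENNReal.ofReal s ∧
      oang (X r s) xinf ∉ Set.Icc (-(2 * ε)) (2 * ε)}) from rfl]
    have : {s : ℝ | 0 ≤ s ∧ tminus X xinf ε r ≤ ENNReal.ofReal s ∧
        oang (X r s) xinf ∉ Set.Icc (-(2 * ε)) (2 * ε)} = ∅ := by
      ext s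
      simp only [mem_setOf_eq, mem_empty_iff_false, iff_false, not_and]
      intro _ hcon
      rw [ht] at hcon
      exact fun _ => absurd (top_le_iff.1 hcon) ENNReal.ofReal_ne_top
    rw [this]
    simp
  · -- E nonempty: first entrance time
    have hEc : IsClosed E := by
      have hωcont : ContinuousOn ω (Ici 0) :=
        fun t ht => (hωd t ht).continuousAt.continuousWithinAt
      have : E = Ici 0 ∩ ω ⁻¹' (Icc (-ε) ε) := by
        ext s
        simp only [hE, mem_setOf_eq, mem_inter_iff, mem_Ici, mem_preimage]
        constructor
        · rintro ⟨h1, h2⟩; exact ⟨h1, by rwa [← hoang s h1]⟩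
        · rintro ⟨h1, h2⟩; exact ⟨h1, by rwa [hoang s h1]⟩
      rw [this]
      exact hωcont.preimage_isClosed_of_isClosed isClosed_Ici isClosed_Icc
    have hbdd : BddBelow E := ⟨0, fun x hx => hx.1⟩
    set m := sInf E with hm
    have hmE : m ∈ E := hEc.csInf_mem hne hbdd
    have hm0 : 0 ≤ m := hmE.1
    have hmω : ω m ∈ Icc (-ε) ε := by rw [← hoang m hm0]; exact hmE.2
    have htm : tminus X xinf ε r = ENNReal.ofReal m := by
      rw [show tminus X xinf ε r = sInf (ENNReal.ofReal '' E) from rfl]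
      apply le_antisymm
      · exact sInf_le (mem_image_of_mem _ hmE)
      · apply le_sInf
        rintro p ⟨s, hs, rfl⟩
        exact ENNReal.ofReal_le_ofReal (csInf_le hbdd hs)
    rw [show tplus X xinf ε r = sInf (ENNReal.ofReal '' {s : ℝ | 0 ≤ s ∧
      tminus X xinf ε r ≤ ENNReal.ofReal s ∧
      oang (X r s) xinf ∉ Set.Icc (-(2 * ε)) (2 * ε)}) from rfl]
    apply le_sInf
    rintro p ⟨s, hs, rfl⟩
    obtain ⟨hs0, hstm, hsout⟩ := hs
    rw [htm] at hstm
    have hms : m ≤ s := (ENNReal.ofReal_le_ofReal_iff hs0).1 hstm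
    apply ENNReal.ofReal_le_ofReal
    -- claim: m + ε / κ < s
    by_contra hcon
    push_neg at hcon
    have hsm : s ≤ m + ε / κ := by
      have : ε / κ ≤ s → False := fun h => absurd h (not_le.2 hcon)
      by_contra h2
      push_neg at h2
      exact this (by linarith [div_nonneg hε.le hκ0.le])
    -- barrier on [m, s]
    have hd1 : ∀ t ∈ Icc m s, HasDerivAt ω
        (-((y t).1 * (y t).2 * ((τ₂ - τ₁) + F t)) / ((y t).1 ^ 2 + (y t).2 ^ 2)) t :=
      fun t ht => hωd t (hm0.trans ht.1)
    have hFnn : ∀ t, 0 ≤ t → 0 ≤ ω t → 0 ≤ F t := by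
      intro t ht hωt
      have hq : 0 ≤ F t / G t := by
        by_contra hq
        push_neg at hq
        have := arctan_strictMono hq
        rw [arctan_zero] at this
        rw [hω] at hωt
        dsimp only at hωt
        linarith
      have := mul_nonneg hq (hGpos t ht).le
      rwa [div_mul_cancel₀ _ (hGpos t ht).ne'] at this
    have hFnp : ∀ t, 0 ≤ t → ω t ≤ 0 → F t ≤ 0 := by
      intro t ht hωt
      have hq : F t / G t ≤ 0 := by
        by_contra hq
        push_neg at hq
        have := arctan_strictMono hq
        rw [arctan_zero] at this
        rw [hω] at hωt
        dsimp only at hωt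
        linarith
      have := mul_nonpos_of_nonpos_of_nonneg hq (hGpos t ht).le
      rwa [div_mul_cancel₀ _ (hGpos t ht).ne'] at this
    have hbar1 := barrier (θ := ω) (t₀ := m) (T := s) (c := ε) (κ := κ) hκ0.le hd1 hmω.2
      (fun t ht hωt => by
        have h1 := (hpos t (hm0.trans ht.1))
        exact stay_bound h1.1 h1.2 hκabs (hFnn t (hm0.trans ht.1) (by linarith)))
    have hbar2 := barrier (θ := fun t => -ω t) (t₀ := m) (T := s) (c := ε) (κ := κ) hκ0.le
      (fun t ht => (hd1 t ht).neg)
      (show -ω m ≤ ε by linarith [hmω.1])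
      (fun t ht hωt => by
        have hωt' : ε ≤ -ω t := hωt
        have h1 := (hpos t (hm0.trans ht.1))
        have h2 := hFnp t (hm0.trans ht.1) (by linarith)
        have h3 := stay_bound' h1.1 h1.2 hκabs h2
        show -(-((y t).1 * (y t).2 * ((τ₂ - τ₁) + F t)) / ((y t).1 ^ 2 + (y t).2 ^ 2)) ≤ κ
        rw [neg_div, neg_neg]
        exact h3)
    have hω1 := hbar1 s ⟨hms, le_rfl⟩
    have hω2 : -ω s ≤ ε + κ * (s - m) := hbar2 s ⟨hms, le_rfl⟩
    have hκs : κ * (s - m) ≤ ε := by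
      have : s - m ≤ ε / κ := by linarith
      calc κ * (s - m) ≤ κ * (ε / κ) := mul_le_mul_of_nonneg_left this hκ0.le
        _ = ε := by field_simp
    apply hsout
    rw [hoang s hs0]
    constructor
    · linarith
    · linarith

/-- When `a > d` and `b > c`, the flow started from `r·x₀` finds the direction
`x∞` in a time vanishing as `r → ∞`, and keeps it for a non-vanishing time. -/
theorem stmt5 (τ₁ τ₂ a b c d : ℝ) (ha : 0 < a) (hb : 0 < b) (hc : 0 < c) (hd : 0 < d)
    (had : d < a) (hbc : c < b)
    (x₀ : ℝ × ℝ) (hx₀ : 0 < x₀.1 ∧ 0 < x₀.2)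
    (X : ℝ → ℝ → ℝ × ℝ)
    (hX0 : ∀ r : ℝ, 0 < r → X r 0 = (r * x₀.1, r * x₀.2))
    (hXmem : ∀ r : ℝ, 0 < r → ∀ t : ℝ, 0 ≤ t → 0 ≤ (X r t).1 ∧ 0 ≤ (X r t).2)
    (hXder : ∀ r : ℝ, 0 < r → ∀ t : ℝ, 0 ≤ t →
      HasDerivAt (X r) (bLV τ₁ τ₂ a b c d (X r t)) t)
    (ε : ℝ) (hε : 0 < ε) :
    Filter.Tendsto
        (fun r => tminus X ((b - c) / (a * b - c * d), (a - d) / (a * b - c * d)) ε r)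
        Filter.atTop (nhds 0) ∧
      0 < Filter.liminf
        (fun r => tplus X ((b - c) / (a * b - c * d), (a - d) / (a * b - c * d)) ε r)
        Filter.atTop := by
  set xinf : ℝ × ℝ := ((b - c) / (a * b - c * d), (a - d) / (a * b - c * d)) with hxinf
  constructor
  · -- part 1 : tminus tends to 0
    set ε' : ℝ := min ε (π / 4) with hε'
    have hε'0 : 0 < ε' := lt_min hε (by positivity)
    have hε'lt : ε' < π / 2 := lt_of_le_of_lt (min_le_right _ _) (by linarith [pi_pos])
    rw [ENNReal.tendsto_nhds_zero]
    intro η hη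
    obtain ⟨δ, hδ0, hδη⟩ : ∃ δ : ℝ, 0 < δ ∧ ENNReal.ofReal δ ≤ η := by
      rcases eq_or_ne η ⊤ with h | h
      · exact ⟨1, one_pos, by simp [h]⟩
      · exact ⟨η.toReal, ENNReal.toReal_pos hη.ne' h, by rw [ENNReal.ofReal_toReal h]⟩
    have key : ∀ᶠ r in atTop, ∃ s ∈ Icc 0 δ, oang (X r s) xinf ∈ Icc (-ε') ε' := by
      rcases le_total (x₀.2 * (b - c)) (x₀.1 * (a - d)) with hside | hside
      · exact enter τ₁ τ₂ a b c d ha hb hc hd had hbc x₀ hx₀ X hX0 hXder hside ε' hε'0 hε'lt δ hδ0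
      · have hswap := enter τ₂ τ₁ b a d c hb ha hd hc hbc had (x₀.2, x₀.1) ⟨hx₀.2, hx₀.1⟩
          (fun r t => ((X r t).2, (X r t).1))
          (fun r hr => by show ((X r 0).2, (X r 0).1) = _; rw [hX0 r hr])
          (fun r hr t ht => by
            have h := hXder r hr t ht
            have h2 := ((ContinuousLinearMap.snd ℝ ℝ ℝ).prod
              (ContinuousLinearMap.fst ℝ ℝ ℝ)).hasFDerivAt.comp_hasDerivAt t h
            exact h2)
          (by dsimp only; linarith)
          ε' hε'0 hε'lt δ hδ0
        filter_upwards [hswap, eventually_gt_atTop 0] with r hex hr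
        obtain ⟨s, hs, hmem⟩ := hex
        refine ⟨s, hs, ?_⟩
        have hp := posX τ₁ τ₂ a b c d x₀ hx₀ X hX0 hXder r hr s hs.1
        have e1 := oang_formula a b c d ha hb hc hd had hbc (X r s) hp.1 hp.2
        have e2 := oang_formula b a d c hb ha hd hc hbc had ((X r s).2, (X r s).1) hp.2 hp.1
        rw [e2] at hmem
        rw [Set.mem_Icc] at hmem ⊢
        rw [e1]
        have e3 : ((a - d) * (X r s).1 - (b - c) * (X r s).2) /
            ((b - c) * (X r s).1 + (a - d) * (X r s).2)
            = -((((b - c) * ((X r s).2, (X r s).1).1 - (a - d) * ((X r s).2, (X r s).1).2) /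
              ((a - d) * ((X r s).2, (X r s).1).1 + (b - c) * ((X r s).2, (X r s).1).2))) := by
          dsimp only
          rw [← neg_div, neg_sub]
          congr 1
          ring
        rw [e3, arctan_neg]
        exact ⟨by linarith [hmem.2], by linarith [hmem.1]⟩
    filter_upwards [key, eventually_gt_atTop 0] with r hex hr
    obtain ⟨s, hs, hmem⟩ := hex
    have h1 : tminus X xinf ε r ≤ ENNReal.ofReal s := by
      apply sInf_le
      refine mem_image_of_mem _ ⟨hs.1, ?_, ?_⟩
      · linarith [hmem.1, min_le_left ε (π / 4)]
      · linarith [hmem.2, min_le_left ε (π / 4)]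
    exact le_trans h1 (le_trans (ENNReal.ofReal_le_ofReal hs.2) hδη)
  · -- part 2 : liminf of tplus is positive
    have hev : ∀ᶠ r in atTop,
        ENNReal.ofReal (ε / (|τ₂ - τ₁| + 1)) ≤ tplus X xinf ε r := by
      filter_upwards [eventually_gt_atTop 0] with r hr
      exact stay τ₁ τ₂ a b c d ha hb hc hd had hbc x₀ hx₀ X hX0 hXder ε hε r hr
    have h0 : (0 : ℝ≥0∞) < ENNReal.ofReal (ε / (|τ₂ - τ₁| + 1)) :=
      ENNReal.ofReal_pos.2 (div_pos hε (by positivity))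
    exact lt_of_lt_of_le h0 (Filter.le_liminf_of_le (by isBoundedDefault) hev)
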